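/- The query answering and rewriting procedure Q-AR is a sound inference system: every derivation step of Q-AR (the rules of T-Inf together with the renaming T-Trans) transforms a clause set into an equisatisfiable clause set; in particular, if Q-AR derives the empty clause from a clause set N, then N is unsatisfiable. -/

import Mathlib

/-!
Common formalization of first-order clausal logic (without equality), following
"Resolution-based query answering and rewriting for the (loosely) guarded fragment".
-/

set_option linter.unusedVariables false

namespace QGF

/-- Symbols: function symbols, constant symbols and predicate symbols, each indexed by ℕ. -/
inductive Head : Type
  | fn : ℕ → Head
  | cn : ℕ → Head
  | pr : ℕ → Head
  deriving DecidableEq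

/-- First-order terms.  A constant `c` is represented as `Term.app (Head.cn c) []`. -/
inductive Term : Type
  | var : ℕ → Term
  | app : Head → List Term → Term

namespace Term

def isVar : Term → Prop
  | var _ => True
  | _ => False

def isConst : Term → Prop
  | app (.cn _) [] => True
  | _ => False

/-- A compound term is a term that is neither a variable nor a constant. -/
def isCompound (t : Term) : Prop := ¬ t.isVar ∧ ¬ t.isConst

/-- Occurrence of a variable in a term. -/
inductive HasVar : Term → ℕ → Prop
  | var (x : ℕ) : HasVar (var x) x
  | app {h : Head} {ts : List Term} {x : ℕ} {t : Term} :
      t ∈ ts → HasVar t x → HasVar (app h ts) x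

def vars (t : Term) : Set ℕ := {x | t.HasVar x}

/-- Subterm relation. -/
inductive SubtermOf : Term → Term → Prop
  | refl (t : Term) : SubtermOf t t
  | app {s : Term} {h : Head} {ts : List Term} {t : Term} :
      t ∈ ts → SubtermOf s t → SubtermOf s (app h ts)

/-- Depth of a term: variables and constants have depth 0. -/
def depth : Term → ℕ
  | var _ => 0
  | app _ ts => (ts.attach.map fun t => depth t.1 + 1).foldr max 0
  decreasing_by
    have := List.sizeOf_lt_of_mem t.2
    simp only [Term.app.sizeOf_spec]
    omega

/-- Applying a substitution to a term. -/
def subst (σ : ℕ → Term) : Term → Term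
  | var x => σ x
  | app h ts => app h (ts.attach.map fun t => subst σ t.1)
  decreasing_by
    have := List.sizeOf_lt_of_mem t.2
    simp only [Term.app.sizeOf_spec]
    omega

def isGround (t : Term) : Prop := t.vars = ∅

/-- An argument is flat if it is a variable or a constant. -/
def flatArg (t : Term) : Prop := t.isVar ∨ t.isConst

/-- An argument is simple if it is a variable, a constant, or a compound term all of
whose arguments are variables or constants. -/
def simpleArg : Term → Prop
  | var _ => True
  | app _ ts => ∀ u ∈ ts, flatArg u

end Term

/-- Substitutions. -/
abbrev Subst := ℕ → Term

/-- Atoms. -/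
structure Atom where
  pred : ℕ
  args : List Term

namespace Atom

def subst (σ : Subst) (a : Atom) : Atom := ⟨a.pred, a.args.map (Term.subst σ)⟩

def vars (a : Atom) : Set ℕ := {x | ∃ t ∈ a.args, x ∈ t.vars}

def flat (a : Atom) : Prop := ∀ t ∈ a.args, t.flatArg

def simple (a : Atom) : Prop := ∀ t ∈ a.args, t.simpleArg

def ground (a : Atom) : Prop := a.vars = ∅

/-- An atom `P(t₁,…,tₙ)` viewed as the term with head the predicate symbol `P`. -/
def toTerm (a : Atom) : Term := .app (.pr a.pred) a.args

end Atom

/-- Literals. -/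
structure Lit where
  pos : Bool
  atom : Atom

def Lit.mkPos (a : Atom) : Lit := ⟨true, a⟩
def Lit.mkNeg (a : Atom) : Lit := ⟨false, a⟩

namespace Lit

def subst (σ : Subst) (L : Lit) : Lit := ⟨L.pos, L.atom.subst σ⟩

def vars (L : Lit) : Set ℕ := L.atom.vars

def ground (L : Lit) : Prop := L.vars = ∅

def flat (L : Lit) : Prop := L.atom.flat

def simple (L : Lit) : Prop := L.atom.simple

/-- Occurrence of a term in a literal (as a subterm of an argument). -/
def hasTerm (L : Lit) (t : Term) : Prop := ∃ u ∈ L.atom.args, t.SubtermOf u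

def hasCompound (L : Lit) : Prop := ∃ t, L.hasTerm t ∧ t.isCompound

/-- A literal is covering if every compound term occurring in it contains exactly the
variables of the literal. -/
def covering (L : Lit) : Prop := ∀ t, L.hasTerm t → t.isCompound → t.vars = L.vars

end Lit

/-- A clause is a (multi)set of literals, represented as a list, read disjunctively,
with all variables implicitly universally quantified. -/
abbrev Clause := List Lit

namespace Clause

def subst (σ : Subst) (C : Clause) : Clause := C.map (Lit.subst σ)

def vars (C : Clause) : Set ℕ := {x | ∃ L ∈ C, x ∈ L.vars}

def ground (C : Clause) : Prop := vars C = ∅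

def flat (C : Clause) : Prop := ∀ L ∈ C, L.flat

def simple (C : Clause) : Prop := ∀ L ∈ C, L.simple

def hasTerm (C : Clause) (t : Term) : Prop := ∃ L ∈ C, L.hasTerm t

/-- A clause is covering if every compound term occurring in it contains exactly the
variables of the clause. -/
def covering (C : Clause) : Prop := ∀ t, hasTerm C t → t.isCompound → t.vars = vars C

def hasNegCompound (C : Clause) : Prop := ∃ L ∈ C, L.pos = false ∧ L.hasCompound

def hasCompound (C : Clause) : Prop := ∃ L ∈ C, L.hasCompound

/-- The predicate symbols occurring in a clause. -/
def preds (C : Clause) : Set ℕ := {p | ∃ L ∈ C, L.atom.pred = p}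

/-- The depth of a clause: the maximal depth of a term occurring in it. -/
def depth (C : Clause) : ℕ :=
  (C.map fun L => (L.atom.args.map Term.depth).foldr max 0).foldr max 0

end Clause

/-- `L` is a guard of `C`:  a negative flat literal of `C` containing all variables of `C`. -/
def Lit.isGuardOf (L : Lit) (C : Clause) : Prop :=
  L ∈ C ∧ L.pos = false ∧ L.flat ∧ L.vars = Clause.vars C

/-- Guarded clauses (Definition 3.3). -/
def Clause.guarded (C : Clause) : Prop :=
  Clause.simple C ∧ Clause.covering C ∧ (Clause.ground C ∨ ∃ L : Lit, L.isGuardOf C)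

/-- `G` is a set of loose guards of `C`. -/
def Clause.looseGuardsOf (G : List Lit) (C : Clause) : Prop :=
  (∀ L ∈ G, L ∈ C ∧ L.pos = false ∧ L.flat) ∧
  (∀ x ∈ Clause.vars C, ∃ L ∈ G, x ∈ L.vars) ∧
  (∀ x ∈ Clause.vars C, ∀ y ∈ Clause.vars C, x ≠ y → ∃ L ∈ G, x ∈ L.vars ∧ y ∈ L.vars)

/-- Loosely guarded clauses (Definition 3.3). -/
def Clause.looselyGuarded (C : Clause) : Prop :=
  Clause.simple C ∧ Clause.covering C ∧
    (Clause.ground C ∨ ∃ G : List Lit, Clause.looseGuardsOf G C)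

/-- Query clauses: flat clauses containing only negative literals (Definition 3.2). -/
def Clause.query (C : Clause) : Prop := Clause.flat C ∧ ∀ L ∈ C, L.pos = false

/-! ### Semantics -/

/-- First-order interpretations. -/
structure Interp : Type 1 where
  dom : Type
  nonempty : Nonempty dom
  fn : Head → List dom → dom
  pr : ℕ → List dom → Prop

def Term.eval (I : Interp) (ν : ℕ → I.dom) : Term → I.dom
  | .var x => ν x
  | .app h ts => I.fn h (ts.attach.map fun t => Term.eval I ν t.1)
  decreasing_by
    have := List.sizeOf_lt_of_mem t.2
    simp only [Term.app.sizeOf_spec]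
    omega

def Atom.holds (I : Interp) (ν : ℕ → I.dom) (a : Atom) : Prop :=
  I.pr a.pred (a.args.map (Term.eval I ν))

def Lit.holds (I : Interp) (ν : ℕ → I.dom) (L : Lit) : Prop :=
  if L.pos then L.atom.holds I ν else ¬ L.atom.holds I ν

/-- A clause holds under a valuation if one of its literals does. -/
def Clause.holdsUnder (I : Interp) (ν : ℕ → I.dom) (C : Clause) : Prop :=
  ∃ L ∈ C, L.holds I ν

/-- A clause is true in an interpretation if its universal closure holds. -/
def Clause.trueIn (I : Interp) (C : Clause) : Prop := ∀ ν, Clause.holdsUnder I ν C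

def Interp.models (I : Interp) (N : Set Clause) : Prop := ∀ C ∈ N, Clause.trueIn I C

/-- Satisfiability of a set of clauses. -/
def satisfiable (N : Set Clause) : Prop := ∃ I : Interp, I.models N

/-- Logical consequence:  every model of `N` is a model of `C`. -/
def entails (N : Set Clause) (C : Clause) : Prop :=
  ∀ I : Interp, I.models N → Clause.trueIn I C

/-- A tautology is a clause true in every interpretation. -/
def Tautology (C : Clause) : Prop := ∀ (I : Interp) (ν : ℕ → I.dom), Clause.holdsUnder I ν C

/-- Two clauses are variants if each is an instance of the other. -/
def Variant (C D : Clause) : Prop :=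
  (∃ σ : Subst, Clause.subst σ C = D) ∧ (∃ ρ : Subst, Clause.subst ρ D = C)

/-! ### Unification -/

def Unifies (σ : Subst) (a b : Atom) : Prop := a.subst σ = b.subst σ

/-- Most general unifiers. -/
def IsMGU (σ : Subst) (a b : Atom) : Prop :=
  Unifies σ a b ∧ ∀ θ : Subst, Unifies θ a b → ∃ ρ : Subst, ∀ x, (σ x).subst ρ = θ x

def Lit.unifies (σ : Subst) (L1 L2 : Lit) : Prop := L1.subst σ = L2.subst σ

def Lit.isMGU (σ : Subst) (L1 L2 : Lit) : Prop :=
  Lit.unifies σ L1 L2 ∧ ∀ θ : Subst, Lit.unifies θ L1 L2 → ∃ ρ : Subst, ∀ x, (σ x).subst ρ = θ x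

def UnifiesAll (σ : Subst) (ps : List (Atom × Atom)) : Prop :=
  ∀ p ∈ ps, Atom.subst σ p.1 = Atom.subst σ p.2

/-- Simultaneous most general unifiers. -/
def IsSimMGU (σ : Subst) (ps : List (Atom × Atom)) : Prop :=
  UnifiesAll σ ps ∧ ∀ θ : Subst, UnifiesAll θ ps → ∃ ρ : Subst, ∀ x, (σ x).subst ρ = θ x

/-! ### Condensation, separability -/

/-- `D` is a subclause of `C` (as multisets). -/
def SubClause (D C : Clause) : Prop := (↑D : Multiset Lit) ≤ (↑C : Multiset Lit)

/-- `D` is a condensation of `C`: a proper subclause of `C` which is an instance of `C`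
(up to duplicate literals). -/
def IsCondensation (D C : Clause) : Prop :=
  SubClause D C ∧ D.length < C.length ∧
    ∃ σ : Subst, ∀ L : Lit, L ∈ D ↔ L ∈ Clause.subst σ C

/-- A clause `C ∨ D` is separable into `C` and `D` if both are non-empty and neither
variable set is included in the other. -/
def Separable (C D : Clause) : Prop :=
  C ≠ [] ∧ D ≠ [] ∧ ¬ Clause.vars C ⊆ Clause.vars D ∧ ¬ Clause.vars D ⊆ Clause.vars C

/-- A clause is indecomposable if it cannot be partitioned into two non-empty
variable-disjoint subclauses. -/
def Clause.indecomposable (C : Clause) : Prop :=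
  ¬ ∃ D E : Clause, D ≠ [] ∧ E ≠ [] ∧
      (↑C : Multiset Lit) = (↑D : Multiset Lit) + (↑E : Multiset Lit) ∧
      Clause.vars D ∩ Clause.vars E = ∅

/-- The predicate symbols occurring in a clause set. -/
def SetPreds (N : Set Clause) : Set ℕ := {p | ∃ C ∈ N, p ∈ Clause.preds C}

/-! ### Orderings -/

namespace Head

def rank : Head → ℕ
  | .pr _ => 0
  | .cn _ => 1
  | .fn _ => 2

def idx : Head → ℕ
  | .pr n => n
  | .cn n => n
  | .fn n => n

/-- The precedence: every function symbol is greater than every constant, and every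
constant is greater than every predicate symbol. -/
def prec (g h : Head) : Prop := g.rank < h.rank ∨ (g.rank = h.rank ∧ g.idx < h.idx)

end Head

/-- The lexicographic path ordering on terms induced by the precedence `Head.prec`.
`LpoGT s t` means `s ≻_lpo t`. -/
inductive LpoGT : Term → Term → Prop
  | subRefl {h : Head} {ss : List Term} {t : Term} :
      t ∈ ss → LpoGT (.app h ss) t
  | sub {h : Head} {ss : List Term} {t : Term} (s : Term) :
      s ∈ ss → LpoGT s t → LpoGT (.app h ss) t
  | prec {h g : Head} {ss ts : List Term} :
      Head.prec g h → (∀ t ∈ ts, LpoGT (.app h ss) t) → LpoGT (.app h ss) (.app g ts)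
  | lex {h : Head} {ss ts u ss' ts' : List Term} {s t : Term} :
      ss = u ++ s :: ss' → ts = u ++ t :: ts' → LpoGT s t →
      (∀ t' ∈ ts, LpoGT (.app h ss) t') → LpoGT (.app h ss) (.app h ts)

/-- The induced lexicographic path ordering on literals, where a negative literal is
greater than the corresponding positive literal. -/
def Lit.lpoGT (L1 L2 : Lit) : Prop :=
  LpoGT L1.atom.toTerm L2.atom.toTerm ∨
    (L1.atom.toTerm = L2.atom.toTerm ∧ L1.pos = false ∧ L2.pos = true)

/-- Admissible orderings on literals; `ord L L'` means `L ≻ L'`. -/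
structure Admissible (ord : Lit → Lit → Prop) : Prop where
  trans : ∀ {a b c : Lit}, ord a b → ord b c → ord a c
  irrefl : ∀ a : Lit, ¬ ord a a
  totalGround : ∀ a b : Lit, a.ground → b.ground → a = b ∨ ord a b ∨ ord b a
  wfGround : WellFounded fun a b : Lit => a.ground ∧ b.ground ∧ ord b a
  liftable : ∀ (a b : Lit) (σ : Subst), ord a b → ord (a.subst σ) (b.subst σ)
  negGtPos : ∀ a : Atom, a.ground → ord (Lit.mkNeg a) (Lit.mkPos a)
  negCompat : ∀ a b : Atom, a.ground → b.ground →
    ord (Lit.mkPos b) (Lit.mkPos a) → ord (Lit.mkPos b) (Lit.mkNeg a)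

/-- The multiset extension of a literal ordering to clauses; `ClauseGT ord C D` means
`C ≻ D`. -/
def ClauseGT (ord : Lit → Lit → Prop) (C D : Clause) : Prop :=
  ∃ X Y Z : Multiset Lit,
    (↑C : Multiset Lit) = Z + X ∧ (↑D : Multiset Lit) = Z + Y ∧ X ≠ 0 ∧
      ∀ y ∈ Y, ∃ x ∈ X, ord x y

/-- `L` is maximal with respect to a clause `C` (`C` not necessarily containing `L`):
some ground instance of `L` is not smaller than the corresponding instances of the
literals of `C`. -/
def maxIn (ord : Lit → Lit → Prop) (L : Lit) (C : Clause) : Prop :=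
  ∃ σ : Subst, Lit.ground (L.subst σ) ∧ Clause.ground (Clause.subst σ C) ∧
    ∀ L' ∈ C, ¬ ord (Lit.subst σ L') (Lit.subst σ L)

/-- `L` is strictly maximal with respect to a clause `C`. -/
def strictMaxIn (ord : Lit → Lit → Prop) (L : Lit) (C : Clause) : Prop :=
  ∃ σ : Subst, Lit.ground (L.subst σ) ∧ Clause.ground (Clause.subst σ C) ∧
    ∀ L' ∈ C, ord (Lit.subst σ L) (Lit.subst σ L')

/-! ### Redundancy -/

def GroundInstanceOf (D C : Clause) : Prop := (∃ σ : Subst, D = Clause.subst σ C) ∧ Clause.ground D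

/-- Redundancy of a clause with respect to a clause set `N`:  every ground instance is
entailed by finitely many smaller ground instances of clauses of `N`. -/
def redundantClause (ord : Lit → Lit → Prop) (N : Set Clause) (C : Clause) : Prop :=
  ∀ D : Clause, GroundInstanceOf D C →
    ∃ S : Finset Clause, (∀ E ∈ S, ∃ C' ∈ N, GroundInstanceOf E C') ∧
      entails (↑S) D ∧ ∀ E ∈ S, ClauseGT ord D E

/-- An inference is redundant in `N` if a premise is redundant, or its conclusion is
redundant in `N` or belongs to `N`. -/
def RedundantInference (ord : Lit → Lit → Prop) (N : Set Clause)
    (premises : List Clause) (concl : Clause) : Prop :=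
  (∃ p ∈ premises, redundantClause ord N p) ∨ redundantClause ord N concl ∨ concl ∈ N

/-! ### Selection and eligibility -/

/-- Selection functions: select a set of negative literals of a clause. -/
def SelFn := Clause → Set Lit

def SelOK (sel : SelFn) : Prop := ∀ C : Clause, ∀ L ∈ sel C, L ∈ C ∧ L.pos = false

/-- A literal is eligible if it is selected, or nothing is selected and it is maximal. -/
def Eligible (ord : Lit → Lit → Prop) (sel : SelFn) (C : Clause) (L : Lit) : Prop :=
  (sel C = ∅ ∧ L ∈ C ∧ maxIn ord L C) ∨ L ∈ sel C

/-- Eligibility under the refinement T-Refine (Algorithm 1), in the cases not depending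
on side premises:  maximal literals for ground clauses and clauses with positive
compound terms, a selected negative compound-term literal, or a selected guard. -/
def EligibleTR (C : Clause) (L : Lit) : Prop :=
  L ∈ C ∧
    ((Clause.ground C ∧ maxIn Lit.lpoGT L C) ∨
     (¬ Clause.ground C ∧ Clause.hasNegCompound C ∧ L.pos = false ∧ L.hasCompound) ∨
     (¬ Clause.ground C ∧ ¬ Clause.hasNegCompound C ∧ Clause.hasCompound C ∧
        maxIn Lit.lpoGT L C) ∨
     (¬ Clause.ground C ∧ ¬ Clause.hasCompound C ∧ L.isGuardOf C))

/-! ### Top-variable resolution -/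

/-- `x` is a top variable of the negative atoms `A i` with respect to the candidate
unifier `σ'`:  the depth of `σ' x` is maximal. -/
def IsTopVar (n : ℕ) (A : Fin n → Atom) (σ' : Subst) (x : ℕ) : Prop :=
  (∃ i, x ∈ (A i).vars) ∧
    ∀ y : ℕ, (∃ i, y ∈ (A i).vars) → (σ' y).depth ≤ (σ' x).depth

/-- The data of an application of the top-variable resolution rule TRes:
main premise `¬A₁ ∨ … ∨ ¬Aₙ ∨ D`,  side premises `Bᵢ ∨ Dᵢ`,
`σ'` a simultaneous mgu of all `n` pairs used to compute top variables, and
`σ` a simultaneous mgu of the first `m` (top-variable) pairs. -/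
structure TResApp where
  n : ℕ
  m : ℕ
  A : Fin n → Atom
  B : Fin n → Atom
  Ds : Fin n → Clause
  D : Clause
  σ' : Subst
  σ : Subst

namespace TResApp

def mainPremise (t : TResApp) : Clause :=
  (List.ofFn fun i => Lit.mkNeg (t.A i)) ++ t.D

def sidePremise (t : TResApp) (i : Fin t.n) : Clause :=
  Lit.mkPos (t.B i) :: t.Ds i

def sidePremises (t : TResApp) : List Clause := List.ofFn t.sidePremise

def resolvent (t : TResApp) : Clause :=
  Clause.subst t.σ
    ((((List.finRange t.n).filter fun i => i.1 < t.m).flatMap t.Ds) ++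
     (((List.finRange t.n).filter fun i => t.m ≤ i.1).map fun i => Lit.mkNeg (t.A i)) ++
     t.D)

/-- Side conditions of the TRes rule. -/
def wf (ord : Lit → Lit → Prop) (t : TResApp) : Prop :=
  0 < t.m ∧ t.m ≤ t.n ∧
  (∀ L ∈ t.D, L.pos = true) ∧
  IsSimMGU t.σ' ((List.finRange t.n).map fun i => (t.A i, t.B i)) ∧
  IsSimMGU t.σ (((List.finRange t.n).filter fun i => i.1 < t.m).map fun i => (t.A i, t.B i)) ∧
  (∀ i : Fin t.n, i.1 < t.m ↔ ∃ x, IsTopVar t.n t.A t.σ' x ∧ x ∈ (t.A i).vars) ∧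
  (∀ i, strictMaxIn ord (Lit.mkPos (t.B i)) (t.Ds i)) ∧
  (∀ i, Clause.vars (t.sidePremise i) ∩ Clause.vars t.mainPremise = ∅) ∧
  (∀ i j, i ≠ j → Clause.vars (t.sidePremise i) ∩ Clause.vars (t.sidePremise j) = ∅)

end TResApp

/-! ### The generating inferences of T-Inf -/

/-- The conclusion-generating inferences of the top-variable inference system T-Inf:
ordered resolution with selection (Res), ordered factoring (Fact), and top-variable
resolution (TRes). `TInfInf ord sel ps c` means `c` is the conclusion of an inference
with premises `ps`. -/
inductive TInfInf (ord : Lit → Lit → Prop) (sel : SelFn) : List Clause → Clause → Prop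
  | res {B A : Atom} {D1 D : Clause} {σ : Subst} :
      IsMGU σ A B →
      sel (Lit.mkPos B :: D1) = ∅ →
      strictMaxIn ord (Lit.mkPos B) D1 →
      Eligible ord sel (Lit.mkNeg A :: D) (Lit.mkNeg A) →
      Clause.vars (Lit.mkPos B :: D1) ∩ Clause.vars (Lit.mkNeg A :: D) = ∅ →
      TInfInf ord sel [Lit.mkPos B :: D1, Lit.mkNeg A :: D] (Clause.subst σ (D1 ++ D))
  | fact {A1 A2 : Atom} {C : Clause} {σ : Subst} :
      IsMGU σ A1 A2 →
      sel (C ++ [Lit.mkPos A1, Lit.mkPos A2]) = ∅ →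
      maxIn ord (Lit.mkPos A1) (C ++ [Lit.mkPos A2]) →
      TInfInf ord sel [C ++ [Lit.mkPos A1, Lit.mkPos A2]] (Clause.subst σ (C ++ [Lit.mkPos A1]))
  | tres (t : TResApp) :
      t.wf ord →
      (∀ i, sel (t.sidePremise i) = ∅) →
      (∀ i : Fin t.n, i.1 < t.m → Lit.mkNeg (t.A i) ∈ sel t.mainPremise) →
      TInfInf ord sel (t.sidePremises ++ [t.mainPremise]) t.resolvent

/-- `N` is saturated up to redundancy with respect to the inference system `inf`:
every inference from non-redundant premises of `N` is redundant in `N`. -/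
def SaturatedUpToRedundancy (ord : Lit → Lit → Prop)
    (inf : List Clause → Clause → Prop) (N : Set Clause) : Prop :=
  ∀ (ps : List Clause) (c : Clause), inf ps c → (∀ p ∈ ps, p ∈ N) →
    RedundantInference ord N ps c


/-! ### Surface literals, chained and isolated variables of query clauses -/

/-- `L` is a surface literal of `Q`: no other literal of `Q` has a strictly larger
variable set. -/
def SurfaceLit (Q : Clause) (L : Lit) : Prop :=
  L ∈ Q ∧ ∀ L' ∈ Q, ¬ (L.vars ⊂ L'.vars)

/-- `x` is a chained variable of `Q`: it occurs in two distinct surface literals with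
different, mutually non-inclusive variable sets. -/
def ChainedVar (Q : Clause) (x : ℕ) : Prop :=
  ∃ L L' : Lit, SurfaceLit Q L ∧ SurfaceLit Q L' ∧ L ≠ L' ∧
    ¬ L.vars ⊆ L'.vars ∧ ¬ L'.vars ⊆ L.vars ∧ x ∈ L.vars ∧ x ∈ L'.vars

/-- `x` is an isolated variable of `Q`: a variable of `Q` that is not chained. -/
def IsolatedVar (Q : Clause) (x : ℕ) : Prop := x ∈ Clause.vars Q ∧ ¬ ChainedVar Q x

/-- A query clause is isolated-only if all its variables are isolated. -/
def Clause.isolatedOnly (Q : Clause) : Prop := ∀ x ∈ Clause.vars Q, ¬ ChainedVar Q x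

/-- A query clause is chained-only if all its variables are chained. -/
def Clause.chainedOnly (Q : Clause) : Prop := ∀ x ∈ Clause.vars Q, ChainedVar Q x

/-! ### The inferences of Q-AR -/

/-- The inferences of Q-AR: the T-Inf inferences together with the separation
inferences (Sep) and the T-Trans renaming inferences, both introducing fresh,
smaller definer predicate symbols. -/
inductive QARInf (ord : Lit → Lit → Prop) (sel : SelFn) : List Clause → Clause → Prop
  | tinf {ps : List Clause} {c : Clause} : TInfInf ord sel ps c → QARInf ord sel ps c
  | sepL {C D : Clause} {ds : ℕ} {xs : List ℕ} :
      Separable C D → {x | x ∈ xs} = Clause.vars C ∩ Clause.vars D →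
      ds ∉ Clause.preds (C ++ D) →
      QARInf ord sel [C ++ D] (Lit.mkNeg ⟨ds, xs.map Term.var⟩ :: C)
  | sepR {C D : Clause} {ds : ℕ} {xs : List ℕ} :
      Separable C D → {x | x ∈ xs} = Clause.vars C ∩ Clause.vars D →
      ds ∉ Clause.preds (C ++ D) →
      QARInf ord sel [C ++ D] (Lit.mkPos ⟨ds, xs.map Term.var⟩ :: D)
  | ttransDef {E F : Clause} {d : ℕ} {xs : List ℕ} :
      {x | x ∈ xs} = Clause.vars E → d ∉ Clause.preds (F ++ E) →
      QARInf ord sel [F ++ E] (Lit.mkPos ⟨d, xs.map Term.var⟩ :: E)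
  | ttransQ {E F : Clause} {d : ℕ} {xs : List ℕ} :
      {x | x ∈ xs} = Clause.vars E → d ∉ Clause.preds (F ++ E) →
      QARInf ord sel [F ++ E] (F ++ [Lit.mkNeg ⟨d, xs.map Term.var⟩])

/-! ### Q-AR as a transition system on clause sets -/

/-- A single derivation step of the procedure Q-AR on clause sets: adding a
Res/TRes/Fact conclusion, replacement by a condensation, deletion of tautologies and
variants, separation (Sep) and the renaming T-Trans (both with fresh definer
predicate symbols). -/
inductive QARStep : Set Clause → Set Clause → Prop
  | res {N : Set Clause} {A B : Atom} {D1 D : Clause} {σ : Subst} :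
      (Lit.mkPos B :: D1) ∈ N → (Lit.mkNeg A :: D) ∈ N → IsMGU σ A B →
      QARStep N (insert (Clause.subst σ (D1 ++ D)) N)
  | tres {N : Set Clause} (t : TResApp) :
      (∀ i, t.sidePremise i ∈ N) → t.mainPremise ∈ N →
      (∀ i : Fin t.n, i.1 < t.m → Atom.subst t.σ (t.A i) = Atom.subst t.σ (t.B i)) →
      QARStep N (insert t.resolvent N)
  | fact {N : Set Clause} {A1 A2 : Atom} {C : Clause} {σ : Subst} :
      (C ++ [Lit.mkPos A1, Lit.mkPos A2]) ∈ N → IsMGU σ A1 A2 →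
      QARStep N (insert (Clause.subst σ (C ++ [Lit.mkPos A1])) N)
  | conden {N : Set Clause} {C D : Clause} :
      C ∈ N → IsCondensation D C → QARStep N (insert D (N \ {C}))
  | deleteTaut {N : Set Clause} {C : Clause} :
      C ∈ N → Tautology C → QARStep N (N \ {C})
  | deleteVariant {N : Set Clause} {C C' : Clause} :
      C ∈ N → C' ∈ N → C ≠ C' → Variant C C' → QARStep N (N \ {C})
  | sep {N : Set Clause} {C D : Clause} {ds : ℕ} {xs : List ℕ} :
      (C ++ D) ∈ N → Separable C D → {x | x ∈ xs} = Clause.vars C ∩ Clause.vars D →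
      ds ∉ SetPreds N →
      QARStep N (insert (Lit.mkNeg ⟨ds, xs.map Term.var⟩ :: C)
        (insert (Lit.mkPos ⟨ds, xs.map Term.var⟩ :: D) (N \ {C ++ D})))
  | ttrans {N : Set Clause} {E F : Clause} {d : ℕ} {xs : List ℕ} :
      (F ++ E) ∈ N → {x | x ∈ xs} = Clause.vars E → d ∉ SetPreds N →
      QARStep N (insert (F ++ [Lit.mkNeg ⟨d, xs.map Term.var⟩])
        (insert (Lit.mkPos ⟨d, xs.map Term.var⟩ :: E) (N \ {F ++ E})))

set_option linter.dupNamespace false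

theorem Term.my_ind {P : Term → Prop} (hv : ∀ x, P (.var x))
    (ha : ∀ h ts, (∀ t ∈ ts, P t) → P (.app h ts)) : ∀ t, P t
  | .var x => hv x
  | .app h ts => ha h ts (fun t ht => Term.my_ind hv ha t)
  decreasing_by
    have := List.sizeOf_lt_of_mem ht
    simp only [Term.app.sizeOf_spec]
    omega

theorem Term.subst_var (σ : Subst) (x : ℕ) : (Term.var x).subst σ = σ x := by
  rw [Term.subst]

theorem Term.subst_app (σ : Subst) (h : Head) (ts : List Term) :
    (Term.app h ts).subst σ = .app h (ts.map (Term.subst σ)) := by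
  rw [Term.subst]; simp [List.attach_map_val]

theorem Term.eval_var (I : Interp) (ν : ℕ → I.dom) (x : ℕ) :
    (Term.var x).eval I ν = ν x := by rw [Term.eval]

theorem Term.eval_app (I : Interp) (ν : ℕ → I.dom) (h : Head) (ts : List Term) :
    (Term.app h ts).eval I ν = I.fn h (ts.map (Term.eval I ν)) := by
  rw [Term.eval]; simp [List.attach_map_val]

/-- Substitution lemma for terms. -/
theorem Term.eval_subst (I : Interp) (ν : ℕ → I.dom) (σ : Subst) :
    ∀ t : Term, (t.subst σ).eval I ν = t.eval I (fun x => (σ x).eval I ν) := by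
  refine Term.my_ind ?_ ?_
  · intro x; rw [Term.subst_var, Term.eval_var]
  · intro h ts ih
    rw [Term.subst_app, Term.eval_app, Term.eval_app, List.map_map]
    congr 1
    exact List.map_congr_left fun t ht => ih t ht

/-- Evaluation only depends on the variables of the term. -/
theorem Term.eval_congr (I : Interp) (ν ν' : ℕ → I.dom) :
    ∀ t : Term, (∀ x ∈ t.vars, ν x = ν' x) → t.eval I ν = t.eval I ν' := by
  refine Term.my_ind ?_ ?_
  · intro x h; rw [Term.eval_var, Term.eval_var]
    exact h x (Term.HasVar.var x)
  · intro h ts ih hv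
    rw [Term.eval_app, Term.eval_app]
    congr 1
    refine List.map_congr_left fun t ht => ih t ht fun x hx => ?_
    exact hv x (Term.HasVar.app ht hx)

theorem Atom.holds_subst (I : Interp) (ν : ℕ → I.dom) (σ : Subst) (a : Atom) :
    (a.subst σ).holds I ν ↔ a.holds I (fun x => (σ x).eval I ν) := by
  unfold Atom.holds Atom.subst
  simp only [List.map_map]
  have : a.args.map (Term.eval I ν ∘ Term.subst σ) =
      a.args.map (Term.eval I (fun x => (σ x).eval I ν)) :=
    List.map_congr_left fun t _ => Term.eval_subst I ν σ t
  rw [this]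

theorem Lit.holds_subst (I : Interp) (ν : ℕ → I.dom) (σ : Subst) (L : Lit) :
    (L.subst σ).holds I ν ↔ L.holds I (fun x => (σ x).eval I ν) := by
  unfold Lit.holds Lit.subst
  cases L.pos <;> simp [Atom.holds_subst]

theorem Clause.holdsUnder_subst (I : Interp) (ν : ℕ → I.dom) (σ : Subst) (C : Clause) :
    (Clause.subst σ C).holdsUnder I ν ↔ C.holdsUnder I (fun x => (σ x).eval I ν) := by
  unfold Clause.holdsUnder Clause.subst
  constructor
  · rintro ⟨L, hL, h⟩
    obtain ⟨L0, hL0, rfl⟩ := List.mem_map.mp hL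
    exact ⟨L0, hL0, (Lit.holds_subst I ν σ L0).mp h⟩
  · rintro ⟨L, hL, h⟩
    exact ⟨L.subst σ, List.mem_map_of_mem hL, (Lit.holds_subst I ν σ L).mpr h⟩

theorem Clause.trueIn_subst {I : Interp} {C : Clause} (h : C.trueIn I) (σ : Subst) :
    (Clause.subst σ C).trueIn I := fun ν =>
  (Clause.holdsUnder_subst I ν σ C).mpr (h _)

theorem Atom.holds_congr (I : Interp) {ν ν' : ℕ → I.dom} (a : Atom)
    (h : ∀ x ∈ a.vars, ν x = ν' x) : a.holds I ν ↔ a.holds I ν' := by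
  unfold Atom.holds
  have : a.args.map (Term.eval I ν) = a.args.map (Term.eval I ν') :=
    List.map_congr_left fun t ht => Term.eval_congr I ν ν' t fun x hx => h x ⟨t, ht, hx⟩
  rw [this]

theorem Lit.holds_congr (I : Interp) {ν ν' : ℕ → I.dom} (L : Lit)
    (h : ∀ x ∈ L.vars, ν x = ν' x) : L.holds I ν ↔ L.holds I ν' := by
  unfold Lit.holds
  cases L.pos <;> simp [Atom.holds_congr I L.atom h]

theorem Clause.holdsUnder_congr (I : Interp) {ν ν' : ℕ → I.dom} (C : Clause)
    (h : ∀ x ∈ Clause.vars C, ν x = ν' x) : C.holdsUnder I ν ↔ C.holdsUnder I ν' := by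
  unfold Clause.holdsUnder
  refine exists_congr fun L => and_congr_right fun hL => ?_
  exact Lit.holds_congr I L fun x hx => h x ⟨L, hL, hx⟩

/-- Modify the interpretation of a single predicate symbol. -/
def Interp.modPr (I : Interp) (p : ℕ) (f : List I.dom → Prop) : Interp :=
  { dom := I.dom, nonempty := I.nonempty, fn := I.fn,
    pr := fun q => if q = p then f else I.pr q }

theorem Term.eval_modPr (I : Interp) (p : ℕ) (f : List I.dom → Prop)
    (ν : ℕ → I.dom) : ∀ t : Term, t.eval (I.modPr p f) ν = t.eval I ν := by
  refine Term.my_ind ?_ ?_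
  · intro x; rw [Term.eval_var (I.modPr p f) ν x, Term.eval_var]
  · intro h ts ih
    rw [Term.eval_app, Term.eval_app (I.modPr p f) ν h ts]
    show I.fn _ _ = _
    congr 1
    exact List.map_congr_left ih

theorem Atom.holds_modPr (I : Interp) (p : ℕ) (f : List I.dom → Prop)
    (ν : ℕ → I.dom) (a : Atom) (hp : a.pred ≠ p) :
    a.holds (I.modPr p f) ν ↔ a.holds I ν := by
  unfold Atom.holds
  have : (I.modPr p f).pr a.pred = I.pr a.pred := by
    simp [Interp.modPr, hp]
  rw [this]
  have : a.args.map (Term.eval (I.modPr p f) ν) = a.args.map (Term.eval I ν) :=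
    List.map_congr_left fun t _ => Term.eval_modPr I p f ν t
  rw [this]

theorem Lit.holds_modPr (I : Interp) (p : ℕ) (f : List I.dom → Prop)
    (ν : ℕ → I.dom) (L : Lit) (hp : L.atom.pred ≠ p) :
    L.holds (I.modPr p f) ν ↔ L.holds I ν := by
  unfold Lit.holds
  cases L.pos <;> simp [Atom.holds_modPr I p f ν L.atom hp]

theorem Clause.holdsUnder_modPr (I : Interp) (p : ℕ) (f : List I.dom → Prop)
    (ν : ℕ → I.dom) (C : Clause) (hp : p ∉ Clause.preds C) :
    C.holdsUnder (I.modPr p f) ν ↔ C.holdsUnder I ν := by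
  unfold Clause.holdsUnder
  refine exists_congr fun L => and_congr_right fun hL => ?_
  exact Lit.holds_modPr I p f ν L (fun h => hp ⟨L, hL, h⟩)

theorem Clause.trueIn_modPr (I : Interp) (p : ℕ) (f : List I.dom → Prop)
    (C : Clause) (hp : p ∉ Clause.preds C) :
    C.trueIn (I.modPr p f) ↔ C.trueIn I :=
  forall_congr' fun ν => Clause.holdsUnder_modPr I p f ν C hp

/-! ### Simple facts about holding clauses -/

theorem Lit.holds_mkPos (I : Interp) (ν : ℕ → I.dom) (a : Atom) :
    (Lit.mkPos a).holds I ν ↔ a.holds I ν := by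
  simp [Lit.holds, Lit.mkPos]

theorem Lit.holds_mkNeg (I : Interp) (ν : ℕ → I.dom) (a : Atom) :
    (Lit.mkNeg a).holds I ν ↔ ¬ a.holds I ν := by
  simp [Lit.holds, Lit.mkNeg]

theorem Clause.holdsUnder_append (I : Interp) (ν : ℕ → I.dom) (C D : Clause) :
    (C ++ D).holdsUnder I ν ↔ C.holdsUnder I ν ∨ D.holdsUnder I ν := by
  unfold Clause.holdsUnder
  constructor
  · rintro ⟨L, hL, h⟩
    rcases List.mem_append.mp hL with h' | h'
    · exact Or.inl ⟨L, h', h⟩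
    · exact Or.inr ⟨L, h', h⟩
  · rintro (⟨L, hL, h⟩ | ⟨L, hL, h⟩)
    · exact ⟨L, List.mem_append_left _ hL, h⟩
    · exact ⟨L, List.mem_append_right _ hL, h⟩

theorem Clause.holdsUnder_cons (I : Interp) (ν : ℕ → I.dom) (L : Lit) (C : Clause) :
    Clause.holdsUnder I ν (L :: C) ↔ L.holds I ν ∨ Clause.holdsUnder I ν C := by
  unfold Clause.holdsUnder
  simp only [List.mem_cons]
  constructor
  · rintro ⟨L', (rfl | hL'), h⟩
    · exact Or.inl h
    · exact Or.inr ⟨L', hL', h⟩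
  · rintro (h | ⟨L', hL', h⟩)
    · exact ⟨L, Or.inl rfl, h⟩
    · exact ⟨L', Or.inr hL', h⟩

theorem Interp.models_insert (I : Interp) (N : Set Clause) (C : Clause) :
    I.models (insert C N) ↔ C.trueIn I ∧ I.models N := by
  unfold Interp.models
  constructor
  · intro h
    exact ⟨h C (Set.mem_insert _ _), fun D hD => h D (Set.mem_insert_of_mem _ hD)⟩
  · rintro ⟨h1, h2⟩ D hD
    rcases hD with rfl | hD
    · exact h1
    · exact h2 D hD

theorem Interp.models_mono {I : Interp} {N M : Set Clause} (h : N ⊆ M)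
    (hM : I.models M) : I.models N := fun C hC => hM C (h hC)

/-- Adding an entailed clause preserves satisfiability in both directions. -/
theorem sat_insert_iff {N : Set Clause} {C : Clause}
    (h : ∀ I : Interp, I.models N → C.trueIn I) :
    satisfiable N ↔ satisfiable (insert C N) := by
  constructor
  · rintro ⟨I, hI⟩
    exact ⟨I, (Interp.models_insert I N C).mpr ⟨h I hI, hI⟩⟩
  · rintro ⟨I, hI⟩
    exact ⟨I, Interp.models_mono (Set.subset_insert _ _) hI⟩

/-! ### Soundness of the generating rules -/

theorem res_trueIn {I : Interp} {A B : Atom} {D1 D : Clause} {σ : Subst}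
    (hB : Clause.trueIn I (Lit.mkPos B :: D1)) (hA : Clause.trueIn I (Lit.mkNeg A :: D))
    (hu : Atom.subst σ A = Atom.subst σ B) :
    Clause.trueIn I (Clause.subst σ (D1 ++ D)) := by
  intro ν
  rw [Clause.holdsUnder_subst]
  set ν' := fun x => (σ x).eval I ν with hν'
  rw [Clause.holdsUnder_append]
  rcases (Clause.holdsUnder_cons I ν' _ _).mp (hA ν') with hnA | hD
  · rcases (Clause.holdsUnder_cons I ν' _ _).mp (hB ν') with hpB | hD1
    · exfalso
      rw [Lit.holds_mkNeg] at hnA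
      rw [Lit.holds_mkPos] at hpB
      apply hnA
      have h1 : (A.subst σ).holds I ν ↔ A.holds I ν' := Atom.holds_subst I ν σ A
      have h2 : (B.subst σ).holds I ν ↔ B.holds I ν' := Atom.holds_subst I ν σ B
      rw [← h1, hu, h2]
      exact hpB
    · exact Or.inl hD1
  · exact Or.inr hD

theorem fact_trueIn {I : Interp} {A1 A2 : Atom} {C : Clause} {σ : Subst}
    (hC : Clause.trueIn I (C ++ [Lit.mkPos A1, Lit.mkPos A2]))
    (hu : Atom.subst σ A1 = Atom.subst σ A2) :
    Clause.trueIn I (Clause.subst σ (C ++ [Lit.mkPos A1])) := by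
  intro ν
  rw [Clause.holdsUnder_subst]
  set ν' := fun x => (σ x).eval I ν with hν'
  rw [Clause.holdsUnder_append]
  rcases (Clause.holdsUnder_append I ν' _ _).mp (hC ν') with hc | h2
  · exact Or.inl hc
  · rcases (Clause.holdsUnder_cons I ν' (Lit.mkPos A1) [Lit.mkPos A2]).mp h2 with h | h
    · exact Or.inr ⟨_, List.mem_singleton_self _, h⟩
    · rcases (Clause.holdsUnder_cons I ν' (Lit.mkPos A2) []).mp h with h | h
      · refine Or.inr ⟨Lit.mkPos A1, List.mem_singleton_self _, ?_⟩
        rw [Lit.holds_mkPos] at h ⊢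
        have h1 : (A1.subst σ).holds I ν ↔ A1.holds I ν' := Atom.holds_subst I ν σ A1
        have h2' : (A2.subst σ).holds I ν ↔ A2.holds I ν' := Atom.holds_subst I ν σ A2
        rw [← h1, hu, h2']
        exact h
      · exact absurd h (by simp [Clause.holdsUnder])

theorem tres_trueIn {I : Interp} (t : TResApp)
    (hside : ∀ i, Clause.trueIn I (t.sidePremise i))
    (hmain : Clause.trueIn I t.mainPremise)
    (hu : ∀ i : Fin t.n, i.1 < t.m → Atom.subst t.σ (t.A i) = Atom.subst t.σ (t.B i)) :
    Clause.trueIn I t.resolvent := by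
  intro ν
  unfold TResApp.resolvent
  rw [Clause.holdsUnder_subst]
  set ν' := fun x => (t.σ x).eval I ν with hν'
  rw [Clause.holdsUnder_append, Clause.holdsUnder_append]
  have hm := hmain ν'
  unfold TResApp.mainPremise at hm
  rcases (Clause.holdsUnder_append I ν' _ _).mp hm with hA | hD
  · obtain ⟨L, hL, hh⟩ := hA
    obtain ⟨i, rfl⟩ := List.mem_ofFn.mp hL
    by_cases him : i.1 < t.m
    · -- top-variable literal: use the side premise
      have hs := hside i ν'
      unfold TResApp.sidePremise at hs
      rcases (Clause.holdsUnder_cons I ν' _ _).mp hs with hB | hDs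
      · exfalso
        rw [Lit.holds_mkNeg] at hh
        rw [Lit.holds_mkPos] at hB
        apply hh
        have h1 := Atom.holds_subst I ν t.σ (t.A i)
        have h2 := Atom.holds_subst I ν t.σ (t.B i)
        rw [← h1, hu i him, h2]
        exact hB
      · obtain ⟨L', hL', hh'⟩ := hDs
        refine Or.inl (Or.inl ⟨L', ?_, hh'⟩)
        refine List.mem_flatMap.mpr ⟨i, ?_, hL'⟩
        simp [List.mem_filter, him]
    · refine Or.inl (Or.inr ⟨_, ?_, hh⟩)
      refine List.mem_map.mpr ⟨i, ?_, rfl⟩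
      simp [List.mem_filter, Nat.le_of_not_lt him]
  · exact Or.inr hD

/-! ### Renaming infrastructure -/

theorem defAtom_holds (I : Interp) (p : ℕ) (f : List I.dom → Prop)
    (ν : ℕ → I.dom) (xs : List ℕ) :
    Atom.holds (I.modPr p f) ν ⟨p, xs.map Term.var⟩ ↔ f (xs.map ν) := by
  unfold Atom.holds
  show (if p = p then f else I.pr p) _ ↔ _
  rw [if_pos rfl, List.map_map]
  have : xs.map (Term.eval (I.modPr p f) ν ∘ Term.var) = xs.map ν :=
    List.map_congr_left fun x _ => Term.eval_var (I.modPr p f) ν x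
  rw [this]

theorem preds_append_left {C D : Clause} {p : ℕ} (h : p ∈ Clause.preds C) :
    p ∈ Clause.preds (C ++ D) := by
  obtain ⟨L, hL, hp⟩ := h
  exact ⟨L, List.mem_append_left _ hL, hp⟩

theorem preds_append_right {C D : Clause} {p : ℕ} (h : p ∈ Clause.preds D) :
    p ∈ Clause.preds (C ++ D) := by
  obtain ⟨L, hL, hp⟩ := h
  exact ⟨L, List.mem_append_right _ hL, hp⟩

theorem notin_setPreds {N : Set Clause} {C : Clause} {p : ℕ}
    (hC : C ∈ N) (h : p ∉ SetPreds N) : p ∉ Clause.preds C :=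
  fun hp => h ⟨C, hC, hp⟩

open Classical in
/-- Merge of two valuations along a set of variables. -/
noncomputable def mergeVal {α : Type} (s : Set ℕ) (ν1 ν2 : ℕ → α) : ℕ → α :=
  fun x => if x ∈ s then ν1 x else ν2 x

theorem mergeVal_mem {α : Type} {s : Set ℕ} (ν1 ν2 : ℕ → α) {x : ℕ} (h : x ∈ s) :
    mergeVal s ν1 ν2 x = ν1 x := by simp [mergeVal, h]

theorem mergeVal_not_mem {α : Type} {s : Set ℕ} (ν1 ν2 : ℕ → α) {x : ℕ} (h : x ∉ s) :
    mergeVal s ν1 ν2 x = ν2 x := by simp [mergeVal, h]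

theorem map_eq_pointwise {α : Type} {xs : List ℕ} {ν ν' : ℕ → α}
    (h : xs.map ν = xs.map ν') : ∀ x ∈ xs, ν x = ν' x := by
  induction xs with
  | nil => intro x hx; cases hx
  | cons a l ih =>
    simp only [List.map_cons, List.cons.injEq] at h
    intro x hx
    rcases List.mem_cons.mp hx with rfl | hx
    · exact h.1
    · exact ih h.2 x hx

/-! ### Soundness of separation -/

theorem sep_sat {N : Set Clause} {C D : Clause} {ds : ℕ} {xs : List ℕ}
    (hmem : (C ++ D) ∈ N)
    (hxs : {x | x ∈ xs} = Clause.vars C ∩ Clause.vars D)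
    (hds : ds ∉ SetPreds N) :
    satisfiable N ↔
      satisfiable (insert (Lit.mkNeg ⟨ds, xs.map Term.var⟩ :: C)
        (insert (Lit.mkPos ⟨ds, xs.map Term.var⟩ :: D) (N \ {C ++ D}))) := by
  have hdsCD : ds ∉ Clause.preds (C ++ D) := notin_setPreds hmem hds
  constructor
  · rintro ⟨I, hI⟩
    set f : List I.dom → Prop :=
      fun args => ∀ ν' : ℕ → I.dom, xs.map ν' = args → Clause.holdsUnder I ν' C with hf
    refine ⟨I.modPr ds f, ?_⟩
    intro E hE
    rcases hE with rfl | hE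
    · -- ¬ds(xs) ∨ C
      intro ν
      rw [Clause.holdsUnder_cons]
      by_cases hfa : f (xs.map ν)
      · refine Or.inr ?_
        have hC : Clause.holdsUnder I ν C := hfa ν rfl
        exact (Clause.holdsUnder_modPr I ds f ν C
          (fun h => hdsCD (preds_append_left h))).mpr hC
      · refine Or.inl ?_
        rw [Lit.holds_mkNeg, defAtom_holds I ds f ν xs]
        exact hfa
    rcases hE with rfl | hE
    · -- ds(xs) ∨ D
      intro ν
      rw [Clause.holdsUnder_cons]
      by_cases hD : Clause.holdsUnder I ν D
      · exact Or.inr ((Clause.holdsUnder_modPr I ds f ν D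
          (fun h => hdsCD (preds_append_right h))).mpr hD)
      · refine Or.inl ?_
        rw [Lit.holds_mkPos, defAtom_holds I ds f ν xs]
        intro ν' hmap
        have hag : ∀ x ∈ xs, ν' x = ν x := map_eq_pointwise hmap
        have hCD := hI (C ++ D) hmem (mergeVal (Clause.vars C) ν' ν)
        rcases (Clause.holdsUnder_append I _ C D).mp hCD with hc | hd
        · exact (Clause.holdsUnder_congr I C fun x hx =>
            (mergeVal_mem ν' ν hx)).mp hc
        · exfalso
          apply hD
          refine (Clause.holdsUnder_congr I D fun x hx => ?_).mp hd
          by_cases hxC : x ∈ Clause.vars C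
          · rw [mergeVal_mem ν' ν hxC]
            exact hag x (show x ∈ {y | y ∈ xs} by rw [hxs]; exact ⟨hxC, hx⟩)
          · exact mergeVal_not_mem ν' ν hxC
    · -- clauses of N not containing ds
      have hEN : E ∈ N := hE.1
      exact (Clause.trueIn_modPr I ds f E (notin_setPreds hEN hds)).mpr (hI E hEN)
  · rintro ⟨I, hI⟩
    refine ⟨I, ?_⟩
    intro E hE
    by_cases hEC : E = C ++ D
    · subst hEC
      intro ν
      have h1 := hI _ (Set.mem_insert _ _) ν
      have h2 := hI _ (Set.mem_insert_of_mem _ (Set.mem_insert _ _)) ν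
      rw [Clause.holdsUnder_cons] at h1 h2
      rw [Clause.holdsUnder_append]
      by_cases ha : Atom.holds I ν ⟨ds, xs.map Term.var⟩
      · rcases h1 with h | h
        · rw [Lit.holds_mkNeg] at h; exact absurd ha h
        · exact Or.inl h
      · rcases h2 with h | h
        · rw [Lit.holds_mkPos] at h; exact absurd h ha
        · exact Or.inr h
    · exact hI E (Set.mem_insert_of_mem _ (Set.mem_insert_of_mem _ ⟨hE, hEC⟩))

/-! ### Soundness of T-Trans -/

theorem ttrans_sat {N : Set Clause} {E F : Clause} {d : ℕ} {xs : List ℕ}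
    (hmem : (F ++ E) ∈ N)
    (hxs : {x | x ∈ xs} = Clause.vars E)
    (hd : d ∉ SetPreds N) :
    satisfiable N ↔
      satisfiable (insert (F ++ [Lit.mkNeg ⟨d, xs.map Term.var⟩])
        (insert (Lit.mkPos ⟨d, xs.map Term.var⟩ :: E) (N \ {F ++ E}))) := by
  have hdFE : d ∉ Clause.preds (F ++ E) := notin_setPreds hmem hd
  constructor
  · rintro ⟨I, hI⟩
    set f : List I.dom → Prop :=
      fun args => ∀ ν' : ℕ → I.dom, xs.map ν' = args → ¬ Clause.holdsUnder I ν' E with hf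
    refine ⟨I.modPr d f, ?_⟩
    intro G hG
    rcases hG with rfl | hG
    · -- F ∨ ¬d(xs)
      intro ν
      rw [Clause.holdsUnder_append]
      have hFE := hI (F ++ E) hmem ν
      rcases (Clause.holdsUnder_append I ν F E).mp hFE with hFh | hEh
      · exact Or.inl ((Clause.holdsUnder_modPr I d f ν F
          (fun h => hdFE (preds_append_left h))).mpr hFh)
      · refine Or.inr ?_
        rw [Clause.holdsUnder_cons]
        refine Or.inl ?_
        rw [Lit.holds_mkNeg, defAtom_holds I d f ν xs]
        intro hfa
        exact hfa ν rfl hEh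
    rcases hG with rfl | hG
    · -- d(xs) ∨ E
      intro ν
      rw [Clause.holdsUnder_cons]
      by_cases hEh : Clause.holdsUnder I ν E
      · exact Or.inr ((Clause.holdsUnder_modPr I d f ν E
          (fun h => hdFE (preds_append_right h))).mpr hEh)
      · refine Or.inl ?_
        rw [Lit.holds_mkPos, defAtom_holds I d f ν xs]
        intro ν' hmap
        have hag : ∀ x ∈ xs, ν' x = ν x := map_eq_pointwise hmap
        intro hE'
        apply hEh
        refine (Clause.holdsUnder_congr I E fun x hx => ?_).mp hE'
        exact hag x (show x ∈ {y | y ∈ xs} by rw [hxs]; exact hx)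
    · have hGN : G ∈ N := hG.1
      exact (Clause.trueIn_modPr I d f G (notin_setPreds hGN hd)).mpr (hI G hGN)
  · rintro ⟨I, hI⟩
    refine ⟨I, ?_⟩
    intro G hG
    by_cases hGE : G = F ++ E
    · subst hGE
      intro ν
      have h1 := hI _ (Set.mem_insert _ _) ν
      have h2 := hI _ (Set.mem_insert_of_mem _ (Set.mem_insert _ _)) ν
      rw [Clause.holdsUnder_append] at h1
      rw [Clause.holdsUnder_cons] at h2
      rw [Clause.holdsUnder_append]
      by_cases ha : Atom.holds I ν ⟨d, xs.map Term.var⟩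
      · rcases h2 with h | h
        · rw [Lit.holds_mkPos] at h
          rcases h1 with h' | h'
          · exact Or.inl h'
          · rw [Clause.holdsUnder_cons] at h'
            rcases h' with h' | h'
            · rw [Lit.holds_mkNeg] at h'; exact absurd ha h'
            · exact absurd h' (by simp [Clause.holdsUnder])
        · exact Or.inr h
      · rcases h2 with h | h
        · rw [Lit.holds_mkPos] at h; exact absurd h ha
        · exact Or.inr h
    · exact hI G (Set.mem_insert_of_mem _ (Set.mem_insert_of_mem _ ⟨hG, hGE⟩))

/-! ### Soundness of the individual steps -/

theorem qar_step_sat {N N' : Set Clause} (h : QARStep N N') :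
    satisfiable N ↔ satisfiable N' := by
  cases h with
  | res hB hA hmgu =>
      exact sat_insert_iff fun I hI => res_trueIn (hI _ hB) (hI _ hA) hmgu.1
  | tres t hside hmain hu =>
      exact sat_insert_iff fun I hI =>
        tres_trueIn t (fun i => hI _ (hside i)) (hI _ hmain) hu
  | fact hC hmgu =>
      exact sat_insert_iff fun I hI => fact_trueIn (hI _ hC) hmgu.1
  | @conden C D hCmem hcond =>
      constructor
      · rintro ⟨I, hI⟩
        refine ⟨I, ?_⟩
        intro E hE
        rcases hE with rfl | hE
        · intro ν
          obtain ⟨hsub, hlen, σ, hiff⟩ := hcond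
          obtain ⟨L, hL, hh⟩ := Clause.trueIn_subst (hI C hCmem) σ ν
          exact ⟨L, (hiff L).mpr hL, hh⟩
        · exact hI E hE.1
      · rintro ⟨I, hI⟩
        refine ⟨I, ?_⟩
        intro E hE
        by_cases hEC : E = C
        · subst hEC
          intro ν
          obtain ⟨L, hL, hh⟩ := hI D (Set.mem_insert _ _) ν
          have hLC : L ∈ E :=
            Multiset.mem_coe.mp (Multiset.mem_of_le hcond.1 (Multiset.mem_coe.mpr hL))
          exact ⟨L, hLC, hh⟩
        · exact hI E (Set.mem_insert_of_mem _ ⟨hE, fun h => hEC (Set.mem_singleton_iff.mp h)⟩)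
  | @deleteTaut C hCmem htaut =>
      constructor
      · rintro ⟨I, hI⟩
        exact ⟨I, Interp.models_mono Set.diff_subset hI⟩
      · rintro ⟨I, hI⟩
        refine ⟨I, ?_⟩
        intro E hE
        by_cases hEC : E = C
        · subst hEC; exact fun ν => htaut I ν
        · exact hI E ⟨hE, fun h => hEC (Set.mem_singleton_iff.mp h)⟩
  | @deleteVariant C C' hCmem hC'mem hne hvar =>
      constructor
      · rintro ⟨I, hI⟩
        exact ⟨I, Interp.models_mono Set.diff_subset hI⟩
      · rintro ⟨I, hI⟩
        refine ⟨I, ?_⟩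
        intro E hE
        by_cases hEC : E = C
        · subst hEC
          obtain ⟨ρ, hρ⟩ := hvar.2
          have hC'M : Clause.trueIn I C' :=
            hI C' ⟨hC'mem, fun h => hne (Set.mem_singleton_iff.mp h).symm⟩
          exact hρ ▸ Clause.trueIn_subst hC'M ρ
        · exact hI E ⟨hE, fun h => hEC (Set.mem_singleton_iff.mp h)⟩
  | sep hmem hsep hxs hds => exact sep_sat hmem hxs hds
  | ttrans hmem hxs hd => exact ttrans_sat hmem hxs hd

/-! ### Soundness of splitting -/

theorem split_sat (N : Set Clause) (C D : Clause) (hC : C ≠ []) (hD : D ≠ [])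
    (hdisj : Clause.vars C ∩ Clause.vars D = ∅) :
    satisfiable (N ∪ {C ++ D}) ↔ (satisfiable (N ∪ {C}) ∨ satisfiable (N ∪ {D})) := by
  constructor
  · rintro ⟨I, hI⟩
    have hCD : Clause.trueIn I (C ++ D) := hI _ (Set.mem_union_right _ rfl)
    by_cases hc : Clause.trueIn I C
    · refine Or.inl ⟨I, fun E hE => ?_⟩
      rcases hE with hE | hE
      · exact hI E (Set.mem_union_left _ hE)
      · rw [Set.mem_singleton_iff.mp hE]; exact hc
    · refine Or.inr ⟨I, fun E hE => ?_⟩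
      rcases hE with hE | hE
      · exact hI E (Set.mem_union_left _ hE)
      · rw [Set.mem_singleton_iff.mp hE]
        intro ν
        obtain ⟨ν1, hν1⟩ := not_forall.mp hc
        have hm := hCD (mergeVal (Clause.vars C) ν1 ν)
        rcases (Clause.holdsUnder_append I _ C D).mp hm with h | h
        · exact absurd ((Clause.holdsUnder_congr I C fun x hx =>
            mergeVal_mem ν1 ν hx).mp h) hν1
        · refine (Clause.holdsUnder_congr I D fun x hx => ?_).mp h
          refine mergeVal_not_mem ν1 ν fun hxC => ?_
          have : x ∈ Clause.vars C ∩ Clause.vars D := ⟨hxC, hx⟩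
          rw [hdisj] at this
          exact this
  · rintro (⟨I, hI⟩ | ⟨I, hI⟩)
    · refine ⟨I, fun E hE => ?_⟩
      rcases hE with hE | hE
      · exact hI E (Set.mem_union_left _ hE)
      · rw [Set.mem_singleton_iff.mp hE]
        intro ν
        obtain ⟨L, hL, hh⟩ := hI C (Set.mem_union_right _ rfl) ν
        exact ⟨L, List.mem_append_left _ hL, hh⟩
    · refine ⟨I, fun E hE => ?_⟩
      rcases hE with hE | hE
      · exact hI E (Set.mem_union_left _ hE)
      · rw [Set.mem_singleton_iff.mp hE]
        intro ν
        obtain ⟨L, hL, hh⟩ := hI D (Set.mem_union_right _ rfl) ν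
        exact ⟨L, List.mem_append_right _ hL, hh⟩

theorem qar_reachable_sat {N M : Set Clause} (h : Relation.ReflTransGen QARStep N M)
    (hN : satisfiable N) : satisfiable M := by
  induction h with
  | refl => exact hN
  | tail _ hstep ih => exact (qar_step_sat hstep).mp ih

/-- The query answering and rewriting procedure Q-AR is sound:  every
derivation step of Q-AR transforms a clause set into an equisatisfiable clause set
(and Split replaces a clause set by two sets, one of which is equisatisfiable);  in
particular, if Q-AR derives the empty clause from a clause set `N`, then `N` is
unsatisfiable. -/
theorem qar_sound :
    -- every Q-AR derivation step preserves satisfiability in both directions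
    (∀ N N' : Set Clause, QARStep N N' → (satisfiable N ↔ satisfiable N')) ∧
    -- soundness of the splitting rule
    (∀ (N : Set Clause) (C D : Clause), C ≠ [] → D ≠ [] →
        Clause.vars C ∩ Clause.vars D = ∅ →
        (satisfiable (N ∪ {C ++ D}) ↔ (satisfiable (N ∪ {C}) ∨ satisfiable (N ∪ {D})))) ∧
    -- if Q-AR derives the empty clause from N, then N is unsatisfiable
    (∀ N M : Set Clause, Relation.ReflTransGen QARStep N M → ([] : Clause) ∈ M →
        ¬ satisfiable N) := by
  refine ⟨fun N N' h => qar_step_sat h, split_sat, ?_⟩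
  intro N M hRT hM hsat
  obtain ⟨I, hI⟩ := qar_reachable_sat hRT hsat
  obtain ⟨L, hL, -⟩ := hI [] hM (fun _ => Classical.choice I.nonempty)
  cases hL
end QGF
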